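/- Let S = {A₁, A₂, A₃, A₄} be four distinct points in the plane, three of which are collinear. Then σ(S)/D(S) < 5, where σ(S) is the sum of all six pairwise distances and D(S) is the maximum pairwise distance. -/

import Mathlib

lemma master5 {E : Type*} [NormedAddCommGroup E] [InnerProductSpace ℝ E] (a b c p : E)
    (hab : a ≠ b) (hbc : b ≠ c) (hac : a ≠ c)
    (hcol : Collinear ℝ ({a, b, c} : Set E)) {D : ℝ}
    (h1 : dist a b ≤ D) (h2 : dist a c ≤ D) (h3 : dist a p ≤ D)
    (h4 : dist b c ≤ D) (h5 : dist b p ≤ D) (h6 : dist c p ≤ D) :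
    dist a b + dist a c + dist a p + dist b c + dist b p + dist c p < 5 * D := by
  rcases hcol.wbtw_or_wbtw_or_wbtw with h | h | h
  · have hs : Sbtw ℝ a b c := ⟨h, hab.symm, hbc⟩
    have he := h.dist_add_dist
    have hlt : dist b p < D := lt_of_lt_of_le (hs.dist_lt_max_dist p) (max_le h3 h6)
    linarith
  · have hs : Sbtw ℝ b c a := ⟨h, hbc.symm, hac.symm⟩
    have he := h.dist_add_dist
    have hlt : dist c p < D := lt_of_lt_of_le (hs.dist_lt_max_dist p) (max_le h5 h3)
    linarith [dist_comm b a, dist_comm c a]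
  · have hs : Sbtw ℝ c a b := ⟨h, hac, hab⟩
    have he := h.dist_add_dist
    have hlt : dist a p < D := lt_of_lt_of_le (hs.dist_lt_max_dist p) (max_le h6 h5)
    linarith [dist_comm c a, dist_comm c b]

theorem stmt5 (A : Fin 4 → EuclideanSpace ℝ (Fin 2))
    (hinj : Function.Injective A)
    (hcol : ∃ i j k : Fin 4, i ≠ j ∧ j ≠ k ∧ i ≠ k ∧
      Collinear ℝ ({A i, A j, A k} : Set (EuclideanSpace ℝ (Fin 2))))
    (D : ℝ)
    (hD : IsGreatest {d : ℝ | ∃ i j : Fin 4, i < j ∧ d = dist (A i) (A j)} D)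
    (hDpos : 0 < D) :
    (∑ p ∈ Finset.univ.filter (fun p : Fin 4 × Fin 4 => p.1 < p.2),
        dist (A p.1) (A p.2)) / D < 5 := by
  obtain ⟨i, j, k, hij, hjk, hik, hcol⟩ := hcol
  obtain ⟨l, hli, hlj, hlk⟩ :=
    (by decide : ∀ i j k : Fin 4, i ≠ j → j ≠ k → i ≠ k → ∃ l, l ≠ i ∧ l ≠ j ∧ l ≠ k)
      i j k hij hjk hik
  have hub : ∀ x y : Fin 4, x ≠ y → dist (A x) (A y) ≤ D := by
    intro x y hxy
    rcases lt_or_gt_of_ne hxy with h | h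
    · exact hD.2 ⟨x, y, h, rfl⟩
    · rw [dist_comm]; exact hD.2 ⟨y, x, h, rfl⟩
  have key := master5 (A i) (A j) (A k) (A l) (hinj.ne hij) (hinj.ne hjk) (hinj.ne hik)
    hcol (hub i j hij) (hub i k hik) (hub i l hli.symm) (hub j k hjk) (hub j l hlj.symm)
    (hub k l hlk.symm)
  have E1 : (∑ p ∈ Finset.univ.filter (fun p : Fin 4 × Fin 4 => p.1 < p.2),
        dist (A p.1) (A p.2)) =
      dist (A 0) (A 1) + dist (A 0) (A 2) + dist (A 0) (A 3) +
      dist (A 1) (A 2) + dist (A 1) (A 3) + dist (A 2) (A 3) := by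
    rw [Finset.sum_filter, ← Finset.univ_product_univ, Finset.sum_product]
    simp [Fin.sum_univ_four]
    ring
  have E2 : (∑ x : Fin 4, ∑ y : Fin 4, dist (A x) (A y)) =
      dist (A i) (A i) + dist (A i) (A j) + dist (A i) (A k) + dist (A i) (A l) +
      (dist (A j) (A i) + dist (A j) (A j) + dist (A j) (A k) + dist (A j) (A l)) +
      (dist (A k) (A i) + dist (A k) (A j) + dist (A k) (A k) + dist (A k) (A l)) +
      (dist (A l) (A i) + dist (A l) (A j) + dist (A l) (A k) + dist (A l) (A l)) := by
    have hbij : Function.Bijective ![i, j, k, l] := by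
      rw [Fintype.bijective_iff_injective_and_card]
      refine ⟨?_, rfl⟩
      intro a b h
      fin_cases a <;> fin_cases b <;> simp_all <;> omega
    let e := Equiv.ofBijective _ hbij
    have he : ∀ x, e x = ![i, j, k, l] x := fun x => rfl
    calc ∑ x : Fin 4, ∑ y : Fin 4, dist (A x) (A y)
        = ∑ x : Fin 4, ∑ y : Fin 4, dist (A x) (A (e y)) := by
          refine Finset.sum_congr rfl fun x _ => (Equiv.sum_comp e _).symm
      _ = ∑ x : Fin 4, ∑ y : Fin 4, dist (A (e x)) (A (e y)) := (Equiv.sum_comp e _).symm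
      _ = _ := by simp [Fin.sum_univ_four, he]
  have E3 : (∑ x : Fin 4, ∑ y : Fin 4, dist (A x) (A y)) =
      dist (A 0) (A 0) + dist (A 0) (A 1) + dist (A 0) (A 2) + dist (A 0) (A 3) +
      (dist (A 1) (A 0) + dist (A 1) (A 1) + dist (A 1) (A 2) + dist (A 1) (A 3)) +
      (dist (A 2) (A 0) + dist (A 2) (A 1) + dist (A 2) (A 2) + dist (A 2) (A 3)) +
      (dist (A 3) (A 0) + dist (A 3) (A 1) + dist (A 3) (A 2) + dist (A 3) (A 3)) := by
    simp [Fin.sum_univ_four]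
  rw [div_lt_iff₀ hDpos, E1]
  linarith [E2.symm.trans E3, key,
    dist_comm (A 0) (A 1), dist_comm (A 0) (A 2), dist_comm (A 0) (A 3),
    dist_comm (A 1) (A 2), dist_comm (A 1) (A 3), dist_comm (A 2) (A 3),
    dist_comm (A i) (A j), dist_comm (A i) (A k), dist_comm (A i) (A l),
    dist_comm (A j) (A k), dist_comm (A j) (A l), dist_comm (A k) (A l),
    dist_self (A 0), dist_self (A 1), dist_self (A 2), dist_self (A 3),
    dist_self (A i), dist_self (A j), dist_self (A k), dist_self (A l)]
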